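/- Let P be a finite abelian p-group and H an abelian subgroup of Aut(P) whose order is coprime to p. Then the natural homomorphism H → Aut(P/Φ(P)) induced by reduction modulo the Frattini subgroup Φ(P) is injective. Furthermore, H acts indecomposably on P if and only if the induced action of H on P/Φ(P) is indecomposable. -/

import Mathlib

/-- A set `S` of automorphisms of `A` acts indecomposably on `A` if there is no internal
direct product decomposition `A = A₁ × A₂` with `A₁`, `A₂` both non-trivial and both
invariant under every element of `S`. -/
def ActsIndecomposably {A : Type*} [Group A] (S : Set (MulAut A)) : Prop :=
  ¬ ∃ A₁ A₂ : Subgroup A, A₁ ≠ ⊥ ∧ A₂ ≠ ⊥ ∧ A₁ ⊓ A₂ = ⊥ ∧ A₁ ⊔ A₂ = ⊤ ∧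
      (∀ f ∈ S, ∀ x ∈ A₁, f x ∈ A₁) ∧ (∀ f ∈ S, ∀ x ∈ A₂, f x ∈ A₂)

/-- The automorphism of the quotient `P ⧸ N` by a characteristic (normal) subgroup `N`
induced by an automorphism of `P`. -/
def inducedQuotAut {P : Type*} [Group P] (N : Subgroup P) [N.Normal] [N.Characteristic]
    (h : MulAut P) : MulAut (P ⧸ N) :=
  QuotientGroup.congr N N h (Subgroup.characteristic_iff_map_eq.mp inferInstance h)

open Subgroup

variable {P : Type} [CommGroup P]

/-- The subgroup of `n`-th powers of a commutative group. -/
def pw (P : Type) [CommGroup P] (n : ℕ) : Subgroup P := (powMonoidHom n).range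

lemma mem_pw {P : Type} [CommGroup P] {n : ℕ} {x : P} : x ∈ pw P n ↔ ∃ y : P, y ^ n = x :=
  Iff.rfl

lemma pow_mem_pw (x : P) (n : ℕ) : x ^ n ∈ pw P n := ⟨x, rfl⟩

theorem frattini_eq [Finite P] {p : ℕ} (hp : p.Prime) (hP : IsPGroup p P) :
    frattini P = pw P p := by
  apply le_antisymm
  · -- frattini ≤ pw p: for x ∉ pw p find coatom avoiding x
    intro x hx
    by_contra hxQ
    obtain ⟨K, ⟨hKQ, hKx⟩, hKmax⟩ := Set.Finite.exists_maximalFor id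
      {L : Subgroup P | pw P p ≤ L ∧ x ∉ L} (Set.toFinite _) ⟨pw P p, le_refl _, hxQ⟩
    simp only [id] at hKmax
    have hcoat : IsCoatom K := by
      constructor
      · intro h; exact hKx (h ▸ mem_top x)
      · intro L hL
        have hxL : x ∈ L := by
          by_contra hxL
          exact hL.ne (le_antisymm hL.le (hKmax ⟨le_trans hKQ hL.le, hxL⟩ hL.le))
        rw [eq_top_iff]
        intro z _
        by_cases hzK : z ∈ K
        · exact hL.le hzK
        · have h1 : x ∈ K ⊔ Subgroup.zpowers z := by
            by_contra h1
            have heq : K = K ⊔ Subgroup.zpowers z := le_antisymm le_sup_left (hKmax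
              ⟨le_trans hKQ le_sup_left, h1⟩ le_sup_left)
            refine hzK ?_
            rw [heq]
            exact (le_sup_right : Subgroup.zpowers z ≤ K ⊔ Subgroup.zpowers z)
              (Subgroup.mem_zpowers z)
          obtain ⟨k, hk, w, hw, hkw⟩ := Subgroup.mem_sup.mp h1
          obtain ⟨t, rfl⟩ := Subgroup.mem_zpowers_iff.mp hw
          have hzpK : z ^ (p : ℤ) ∈ K := by
            have := hKQ (pow_mem_pw z p)
            rwa [← zpow_natCast] at this
          have hpt : ¬ ((p : ℤ) ∣ t) := by
            rintro ⟨s, rfl⟩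
            apply hKx
            rw [← hkw]
            refine K.mul_mem hk ?_
            have : (z ^ (p : ℤ)) ^ s ∈ K := K.zpow_mem hzpK s
            rwa [← zpow_mul] at this
          have hg : IsCoprime (t : ℤ) (p : ℤ) := by
            rw [Int.isCoprime_iff_gcd_eq_one, Int.gcd]
            simp only [Int.natAbs_natCast]
            have hco : Nat.Coprime p t.natAbs := by
              refine (Nat.Prime.coprime_iff_not_dvd hp).mpr ?_
              intro hd
              exact hpt (dvd_trans (Int.natCast_dvd_natCast.mpr hd) (Int.natAbs_dvd.mpr dvd_rfl))
            exact Nat.coprime_comm.mp hco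
          obtain ⟨u, v, huv⟩ := hg
          have hz : z = (z ^ t) ^ u * (z ^ (p:ℤ)) ^ v := by
            rw [← zpow_mul, ← zpow_mul, ← zpow_add, show t * u + (p:ℤ) * v = 1 by linarith [huv]]
            exact (zpow_one z).symm
          have hzt : z ^ t ∈ L := by
            have h2 : z ^ t = k⁻¹ * x := by rw [← hkw]; group
            rw [h2]
            exact L.mul_mem (L.inv_mem (hL.le hk)) hxL
          rw [hz]
          exact L.mul_mem (L.zpow_mem hzt u) (L.zpow_mem (hL.le hzpK) v)
    exact hKx (frattini_le_coatom hcoat hx)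
  · -- pw p ≤ frattini: y^p in every coatom K
    intro w hw
    rw [frattini, Order.radical, Subgroup.mem_iInf]
    intro K
    rw [Subgroup.mem_iInf]
    intro hK
    obtain ⟨y, rfl⟩ := mem_pw.mp hw
    by_contra hyK
    have hbt : ∀ T : Subgroup (P ⧸ K), T = ⊥ ∨ T = ⊤ := by
      intro T
      have hKle : K ≤ Subgroup.comap (QuotientGroup.mk' K) T := by
        intro k hk
        simp only [Subgroup.mem_comap, QuotientGroup.mk'_apply]
        rw [show ((k : P ⧸ K) : P ⧸ K) = 1 from (QuotientGroup.eq_one_iff k).mpr hk]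
        exact T.one_mem
      rcases hKle.lt_or_eq with hlt | heq
      · right
        have h3 := hK.2 _ hlt
        calc T = Subgroup.map (QuotientGroup.mk' K) (Subgroup.comap (QuotientGroup.mk' K) T) :=
              (Subgroup.map_comap_eq_self_of_surjective (QuotientGroup.mk'_surjective K) T).symm
          _ = ⊤ := by rw [h3, ← Subgroup.map_top_of_surjective _ (QuotientGroup.mk'_surjective K)]
      · left
        rw [eq_bot_iff]
        intro v hv
        obtain ⟨z, rfl⟩ := QuotientGroup.mk'_surjective K v
        have hzz : z ∈ K := by rw [heq]; exact hv
        simpa [Subgroup.mem_bot] using (QuotientGroup.eq_one_iff z).mpr hzz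
    set yb : P ⧸ K := ((y : P ⧸ K)) with hyb
    have hyp1 : yb ^ p ≠ 1 := by
      intro h
      apply hyK
      rw [← QuotientGroup.eq_one_iff]
      push_cast
      exact h
    have hZ : Subgroup.zpowers (yb ^ p) = ⊤ := by
      rcases hbt (Subgroup.zpowers (yb ^ p)) with h | h
      · exact absurd (h ▸ Subgroup.mem_zpowers (yb ^ p)) (by simp [Subgroup.mem_bot, hyp1])
      · exact h
    have hymem : yb ∈ Subgroup.zpowers (yb ^ p) := hZ ▸ Subgroup.mem_top yb
    obtain ⟨t, ht⟩ := Subgroup.mem_zpowers_iff.mp hymem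
    have hyb1 : yb ≠ 1 := fun h => hyp1 (by rw [h, one_pow])
    obtain ⟨s, hs⟩ := (IsPGroup.to_quotient hP K) yb
    have hdvd : orderOf yb ∣ p ^ s := orderOf_dvd_of_pow_eq_one hs
    obtain ⟨j, hjs, hj⟩ := (Nat.dvd_prime_pow hp).mp hdvd
    have hj1 : j ≠ 0 := by
      intro h
      rw [h, pow_zero] at hj
      exact hyb1 (orderOf_eq_one_iff.mp hj)
    have hpord : (p : ℤ) ∣ (orderOf yb : ℤ) := by
      rw [hj]
      exact_mod_cast dvd_pow_self p hj1
    have h5 : yb ^ ((p : ℤ) * t - 1) = 1 := by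
      rw [zpow_sub, zpow_one, mul_inv_eq_one, zpow_mul, zpow_natCast]
      exact ht
    have h6 : (orderOf yb : ℤ) ∣ ((p : ℤ) * t - 1) := orderOf_dvd_iff_zpow_eq_one.mpr h5
    have h7 : (p : ℤ) ∣ 1 := by
      have := dvd_trans hpord h6
      have h8 : (p : ℤ) ∣ (p : ℤ) * t := Dvd.intro t rfl
      simpa using dvd_sub h8 this
    have h9 := Int.le_of_dvd one_pos h7
    have h10 := hp.two_le
    omega

variable {P : Type} [CommGroup P]

/-- The endomorphism ring of the (additivization of the) commutative group `P`. -/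
abbrev Rng (P : Type) [CommGroup P] := Module.End ℤ (Additive P)

/-- Application of an additive endomorphism to an element of the multiplicative group. -/
def ap (f : Rng P) (x : P) : P := Additive.toMul (f (Additive.ofMul x))

@[simp] lemma ap_ringOne (x : P) : ap (1 : Rng P) x = x := rfl
@[simp] lemma ap_ringZero (x : P) : ap (0 : Rng P) x = 1 := rfl
@[simp] lemma ap_ringMul (f g : Rng P) (x : P) : ap (f * g) x = ap f (ap g x) := rfl
@[simp] lemma ap_ringAdd (f g : Rng P) (x : P) : ap (f + g) x = ap f x * ap g x := rfl
@[simp] lemma ap_ringNeg (f : Rng P) (x : P) : ap (-f) x = (ap f x)⁻¹ := rfl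
@[simp] lemma ap_ringSub (f g : Rng P) (x : P) : ap (f - g) x = ap f x * (ap g x)⁻¹ := by
  rw [sub_eq_add_neg, ap_ringAdd, ap_ringNeg]

@[simp] lemma ap_mul (f : Rng P) (x y : P) : ap f (x * y) = ap f x * ap f y :=
  f.map_add (Additive.ofMul x) (Additive.ofMul y)
@[simp] lemma ap_one (f : Rng P) : ap f 1 = 1 := f.map_zero
@[simp] lemma ap_inv (f : Rng P) (x : P) : ap f x⁻¹ = (ap f x)⁻¹ := f.map_neg _
@[simp] lemma ap_pow (f : Rng P) (x : P) (n : ℕ) : ap f (x ^ n) = (ap f x) ^ n :=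
  map_nsmul f n (Additive.ofMul x)

lemma ap_ringPow (f : Rng P) (n : ℕ) (x : P) : ap (f ^ n) x = (ap f)^[n] x := by
  induction n generalizing x with
  | zero => simp
  | succ n ih =>
    rw [pow_succ, ap_ringMul, Function.iterate_succ_apply, ih]

lemma ap_natCast (n : ℕ) (x : P) : ap ((n : Rng P)) x = x ^ n := by
  induction n with
  | zero => simp
  | succ n ih => push_cast; rw [ap_ringAdd, ih, ap_ringOne, pow_succ]

lemma rng_ext {f g : Rng P} (h : ∀ x : P, ap f x = ap g x) : f = g :=
  LinearMap.ext fun x => h (Additive.toMul x)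



/-- The endomorphism associated to an automorphism. -/
def autEnd (h : MulAut P) : Rng P :=
  AddMonoidHom.toIntLinearMap (MonoidHom.toAdditive h.toMonoidHom)

@[simp] lemma ap_autEnd (h : MulAut P) (x : P) : ap (autEnd h) x = h x := rfl

lemma autEnd_mul (g h : MulAut P) : autEnd (g * h) = autEnd g * autEnd h := rfl

lemma autEnd_pow (h : MulAut P) (n : ℕ) : autEnd (h ^ n) = (autEnd h) ^ n := by
  induction n with
  | zero => rfl
  | succ n ih => rw [pow_succ, pow_succ, autEnd_mul, ih]

/-- The subring generated by (the endomorphisms of) a subgroup `H` of automorphisms. -/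
def AH (H : Subgroup (MulAut P)) : Subring (Rng P) :=
  Subring.closure (autEnd '' (H : Set (MulAut P)))

lemma autEnd_mem_AH {H : Subgroup (MulAut P)} {h : MulAut P} (hh : h ∈ H) :
    autEnd h ∈ AH H :=
  Subring.subset_closure ⟨h, hh, rfl⟩

lemma one_mem_AH (H : Subgroup (MulAut P)) : (1 : Rng P) ∈ AH H := (AH H).one_mem

lemma AH_comm {H : Subgroup (MulAut P)} (hab : ∀ a ∈ H, ∀ b ∈ H, a * b = b * a) :
    ∀ a ∈ AH H, ∀ b ∈ AH H, a * b = b * a := by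
  have base : ∀ s ∈ autEnd '' (H : Set (MulAut P)), ∀ b ∈ AH H, s * b = b * s := by
    rintro s ⟨h, hh, rfl⟩ b hb
    induction hb using Subring.closure_induction with
    | mem y hy =>
      obtain ⟨g, hg, rfl⟩ := hy
      rw [← autEnd_mul, ← autEnd_mul, hab h hh g hg]
    | zero => rw [mul_zero, zero_mul]
    | one => rw [mul_one, one_mul]
    | add y z _ _ hy hz => rw [mul_add, add_mul, hy, hz]
    | neg y _ hy => rw [mul_neg, neg_mul, hy]
    | mul y z _ _ hy hz => rw [← mul_assoc, hy, mul_assoc, hz, mul_assoc]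
  intro a ha b hb
  induction ha using Subring.closure_induction with
  | mem y hy => exact base y hy b hb
  | zero => rw [zero_mul, mul_zero]
  | one => rw [one_mul, mul_one]
  | add y z _ _ hy hz => rw [add_mul, mul_add, hy, hz]
  | neg y _ hy => rw [neg_mul, mul_neg, hy]
  | mul y z _ _ hy hz => rw [mul_assoc, hz, ← mul_assoc, hy, mul_assoc]

/-- Invariance of a subgroup under a set of automorphisms extends to the generated subring. -/
lemma AH_inv {H : Subgroup (MulAut P)} {Q : Subgroup P}
    (hQ : ∀ h ∈ H, ∀ x ∈ Q, h x ∈ Q) :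
    ∀ a ∈ AH H, ∀ x ∈ Q, ap a x ∈ Q := by
  intro a ha
  induction ha using Subring.closure_induction with
  | mem y hy =>
    obtain ⟨g, hg, rfl⟩ := hy
    intro x hx
    rw [ap_autEnd]
    exact hQ g hg x hx
  | zero => intro x hx; rw [ap_ringZero]; exact Q.one_mem
  | one => intro x hx; rwa [ap_ringOne]
  | add y z _ _ hy hz => intro x hx; rw [ap_ringAdd]; exact Q.mul_mem (hy x hx) (hz x hx)
  | neg y _ hy => intro x hx; rw [ap_ringNeg]; exact Q.inv_mem (hy x hx)
  | mul y z _ _ hy hz => intro x hx; rw [ap_ringMul]; exact hy _ (hz x hx)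

/-- The orbit subgroup `A·x` of `x` under the subring generated by `H`. -/
def orb (H : Subgroup (MulAut P)) (x : P) : Subgroup P where
  carrier := {y | ∃ a ∈ AH H, ap a x = y}
  one_mem' := ⟨0, (AH H).zero_mem, rfl⟩
  mul_mem' := by
    rintro y z ⟨a, ha, rfl⟩ ⟨b, hb, rfl⟩
    exact ⟨a + b, (AH H).add_mem ha hb, by rw [ap_ringAdd]⟩
  inv_mem' := by
    rintro y ⟨a, ha, rfl⟩
    exact ⟨-a, (AH H).neg_mem ha, by rw [ap_ringNeg]⟩

lemma mem_orb {H : Subgroup (MulAut P)} {x y : P} :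
    y ∈ orb H x ↔ ∃ a ∈ AH H, ap a x = y := Iff.rfl

lemma self_mem_orb (H : Subgroup (MulAut P)) (x : P) : x ∈ orb H x :=
  ⟨1, one_mem_AH H, rfl⟩

lemma orb_inv (H : Subgroup (MulAut P)) (x : P) :
    ∀ h ∈ H, ∀ y ∈ orb H x, h y ∈ orb H x := by
  rintro h hh y ⟨a, ha, rfl⟩
  exact ⟨autEnd h * a, (AH H).mul_mem (autEnd_mem_AH hh) ha, rfl⟩

section finiteP
variable [Finite P]

instance : Finite (Rng P) :=
  Finite.of_injective (fun f => (⇑f : Additive P → Additive P)) DFunLike.coe_injective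

/-- An idempotent power: for any `a` there is `n ≥ 1` with `a ^ (2n) = a ^ n`. -/
lemma exists_idem_pow (a : Rng P) : ∃ n, 1 ≤ n ∧ a ^ (2 * n) = a ^ n := by
  obtain ⟨i, j, hij, hija⟩ := Finite.exists_ne_map_eq_of_infinite (fun n : ℕ => a ^ n)
  wlog hlt : i < j generalizing i j
  · exact this j i hij.symm hija.symm (by omega)
  set d := j - i with hd
  have hd1 : 1 ≤ d := by omega
  have hstab : ∀ k, i ≤ k → a ^ (k + d) = a ^ k := by
    intro k hk
    have : a ^ (k + d) = a ^ (k - i) * a ^ (i + d) := by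
      rw [← pow_add]; congr 1; omega
    rw [this, show i + d = j by omega, ← hija, ← pow_add, show k - i + i = k by omega]
  have hiter : ∀ n, i ≤ n → ∀ m, a ^ (n + m * d) = a ^ n := by
    intro n hn m
    induction m with
    | zero => simp
    | succ m ih =>
      have : n + (m + 1) * d = (n + m * d) + d := by ring
      rw [this, hstab _ (by omega), ih]
  refine ⟨(i + 1) * d, by nlinarith, ?_⟩
  have : 2 * ((i + 1) * d) = (i + 1) * d + (i + 1) * d := by ring
  rw [this, hiter ((i+1)*d) (by nlinarith) (i+1)]

/-- Fitting's lemma : an element of the generated subring is nilpotent or bijective,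
provided `H` acts indecomposably. -/
lemma fitting {H : Subgroup (MulAut P)} (hab : ∀ a ∈ H, ∀ b ∈ H, a * b = b * a)
    (hind : ActsIndecomposably (H : Set (MulAut P)))
    {a : Rng P} (ha : a ∈ AH H) :
    (∃ n, 1 ≤ n ∧ a ^ n = 0) ∨ Function.Bijective (ap a) := by
  obtain ⟨n, hn1, hidem⟩ := exists_idem_pow a
  set g : Rng P := a ^ n with hg
  have hgg : g * g = g := by rw [hg, ← pow_add, show n + n = 2 * n by ring, hidem]
  have hgA : g ∈ AH H := Subring.pow_mem _ ha n
  -- kernel and image subgroups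
  set Kg : Subgroup P :=
    { carrier := {x | ap g x = 1}
      one_mem' := by simp
      mul_mem' := by intro x y hx hy; simp only [Set.mem_setOf_eq, ap_mul] at *; rw [hx, hy, mul_one]
      inv_mem' := by intro x hx; simp only [Set.mem_setOf_eq, ap_inv] at *; rw [hx, inv_one] }
    with hKg
  set Ig : Subgroup P :=
    { carrier := {y | ∃ x, ap g x = y}
      one_mem' := ⟨1, by simp⟩
      mul_mem' := by rintro y z ⟨x, rfl⟩ ⟨w, rfl⟩; exact ⟨x * w, by simp⟩
      inv_mem' := by rintro y ⟨x, rfl⟩; exact ⟨x⁻¹, by simp⟩ }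
    with hIg
  have hmemK : ∀ x, x ∈ Kg ↔ ap g x = 1 := fun x => Iff.rfl
  have hmemI : ∀ y, y ∈ Ig ↔ ∃ x, ap g x = y := fun y => Iff.rfl
  have hgap : ∀ x, ap g (ap g x) = ap g x := by
    intro x
    rw [← ap_ringMul, hgg]
  have hcommap : ∀ f : MulAut P, f ∈ H → ∀ z, ap g (f z) = f (ap g z) := by
    intro f hf z
    have hcomm : autEnd f * g = g * autEnd f := AH_comm hab _ (autEnd_mem_AH hf) _ hgA
    have h1 : ap (g * autEnd f) z = ap (autEnd f * g) z := by rw [hcomm]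
    simp only [ap_ringMul, ap_autEnd] at h1
    exact h1
  by_cases hIbot : Ig = ⊥
  · left
    refine ⟨n, hn1, ?_⟩
    apply rng_ext
    intro x
    have : ap g x ∈ Ig := ⟨x, rfl⟩
    rw [hIbot, Subgroup.mem_bot] at this
    simpa [hg] using this
  · by_cases hKbot : Kg = ⊥
    · right
      rw [← Finite.injective_iff_bijective]
      have hginj : Function.Injective (ap g) := by
        intro x y hxy
        have : x * y⁻¹ ∈ Kg := by
          rw [hmemK, ap_mul, ap_inv, hxy, mul_inv_cancel]
        rw [hKbot, Subgroup.mem_bot] at this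
        exact mul_inv_eq_one.mp this
      have : Function.Injective ((ap a)^[n]) := by
        have hh : (ap a)^[n] = ap g := by funext z; rw [hg, ap_ringPow]
        rw [hh]; exact hginj
      obtain ⟨m, rfl⟩ : ∃ m, n = m + 1 := ⟨n - 1, by omega⟩
      rw [Function.iterate_succ] at this
      exact Function.Injective.of_comp this
    · exfalso
      apply hind
      refine ⟨Kg, Ig, hKbot, hIbot, ?_, ?_, ?_, ?_⟩
      · rw [eq_bot_iff]
        intro x hx
        rw [Subgroup.mem_inf] at hx
        obtain ⟨hxK, hxI⟩ := hx
        obtain ⟨y, rfl⟩ := (hmemI _).mp hxI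
        rw [Subgroup.mem_bot]
        rw [hmemK] at hxK
        rw [← hgap y]
        exact hxK
      · rw [eq_top_iff]
        intro x _
        have h1 : x * (ap g x)⁻¹ ∈ Kg := by
          rw [hmemK, ap_mul, ap_inv, hgap, mul_inv_cancel]
        have h2 : ap g x ∈ Ig := ⟨x, rfl⟩
        have : x = (x * (ap g x)⁻¹) * ap g x := by group
        rw [this]
        exact Subgroup.mul_mem _ ((le_sup_left : Kg ≤ Kg ⊔ Ig) h1)
          ((le_sup_right : Ig ≤ Kg ⊔ Ig) h2)
      · intro f hf x hx
        rw [hmemK] at hx ⊢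
        rw [hcommap f hf, hx, map_one]
      · intro f hf y hy
        obtain ⟨x, rfl⟩ := (hmemI _).mp hy
        exact ⟨f x, hcommap f hf x⟩

/-- A bijective element of the generated subring has an inverse in the subring. -/
lemma AH_inverse {H : Subgroup (MulAut P)} {a : Rng P} (ha : a ∈ AH H)
    (hinj : Function.Injective (ap a)) :
    ∃ b ∈ AH H, a * b = 1 ∧ b * a = 1 := by
  obtain ⟨i, j, hij, hija⟩ := Finite.exists_ne_map_eq_of_infinite (fun n : ℕ => a ^ n)
  wlog hlt : i < j generalizing i j
  · exact this j i hij.symm hija.symm (by omega)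
  have hiinj : Function.Injective (ap (a ^ i)) := by
    have hh : ap (a ^ i) = (ap a)^[i] := funext fun z => ap_ringPow a i z
    rw [hh]
    exact hinj.iterate i
  have hone : a ^ (j - i) = 1 := by
    apply rng_ext
    intro x
    apply hiinj
    rw [← ap_ringMul, ← pow_add, show i + (j - i) = j by omega, ← hija]
    simp
  obtain ⟨m, hm⟩ : ∃ m, j - i = m + 1 := ⟨j - i - 1, by omega⟩
  refine ⟨a ^ m, Subring.pow_mem _ ha m, ?_, ?_⟩
  · rw [← pow_succ', ← hm, hone]
  · rw [← pow_succ, ← hm, hone]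

end finiteP

section nil
variable [Finite P] {p : ℕ} {H : Subgroup (MulAut P)}

/-- Any nilpotent element of the subring generated by a coprime abelian automorphism
group is divisible by `p` within that subring. -/
lemma nil_mem_p (hp : p.Prime) (hab : ∀ a ∈ H, ∀ b ∈ H, a * b = b * a)
    (hcop : (Nat.card H).Coprime p) {a : Rng P} (ha : a ∈ AH H)
    (hnil : ∃ n, a ^ n = 0) :
    ∃ b ∈ AH H, a = (p : Rng P) * b := by
  -- the exponent (p ^ k) = p^k with p^k ≡ 1 mod |H|
  have hmpos : 0 < Nat.card H := Nat.card_pos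
  set m := Nat.card H with hm
  set k := m.totient with hk
  have hk1 : 0 < k := Nat.totient_pos.mpr hmpos
  have hmod : p ^ k ≡ 1 [MOD m] := Nat.ModEq.pow_totient hcop.symm
  have hpk1 : 1 ≤ p ^ k := Nat.one_le_pow _ _ hp.pos
  obtain ⟨t, ht⟩ : ∃ t, p ^ k = 1 + m * t := by
    obtain ⟨t, ht⟩ := (Nat.modEq_iff_dvd' hpk1).mp hmod.symm
    exact ⟨t, by omega⟩
  -- automorphisms are fixed by the (p ^ k)-th power map
  have haut : ∀ f : MulAut P, f ∈ H → f ^ (p ^ k) = f := by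
    intro f hf
    have h1 : (⟨f, hf⟩ : H) ^ m = 1 := by rw [hm]; exact pow_card_eq_one'
    have h2 : f ^ m = 1 := by
      have := congrArg (Subgroup.subtype H) h1
      simpa using this
    rw [ht, pow_add, pow_one, pow_mul, h2, one_pow, mul_one]
  -- Frobenius congruence: x ^ (p ^ k) ≡ x mod p·(AH H) for all x in AH H
  have hfrob : ∀ x ∈ AH H, ∃ y ∈ AH H, x ^ (p ^ k) - x = (p : Rng P) * y := by
    intro x hx
    induction hx using Subring.closure_induction with
    | mem u hu =>
      obtain ⟨f, hf, rfl⟩ := hu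
      refine ⟨0, Subring.zero_mem _, ?_⟩
      rw [← autEnd_pow, haut f hf, sub_self, mul_zero]
    | zero =>
      refine ⟨0, Subring.zero_mem _, ?_⟩
      rw [zero_pow (by positivity), sub_self, mul_zero]
    | one =>
      refine ⟨0, Subring.zero_mem _, ?_⟩
      rw [one_pow, sub_self, mul_zero]
    | add u v hu hv ihu ihv =>
      obtain ⟨yu, hyu, hyu'⟩ := ihu
      obtain ⟨yv, hyv, hyv'⟩ := ihv
      have hcomm : Commute u v := AH_comm hab u hu v hv
      have hSex : ∃ S ∈ AH H, (u + v) ^ (p ^ k) = u ^ (p ^ k) + v ^ (p ^ k) + p * S := by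
        refine ⟨u * (v * ∑ i ∈ Finset.Ioo 0 (p ^ k), u ^ (i - 1) * v ^ (p ^ k - i - 1)
          * (((p ^ k).choose i / p : ℕ) : Rng P)), ?_,
          (Commute.add_pow_prime_pow_eq hp hcomm k).trans (by simp only [mul_assoc])⟩
        refine Subring.mul_mem _ hu (Subring.mul_mem _ hv ?_)
        apply Subring.sum_mem
        intro i _
        exact Subring.mul_mem _ (Subring.mul_mem _ (Subring.pow_mem _ hu _)
          (Subring.pow_mem _ hv _)) (natCast_mem _ _)
      obtain ⟨S, hSA, hbin⟩ := hSex
      refine ⟨S + yu + yv, Subring.add_mem _ (Subring.add_mem _ hSA hyu) hyv, ?_⟩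
      rw [hbin, mul_add, mul_add, ← hyu', ← hyv']
      abel
    | neg u hu ihu =>
      obtain ⟨y, hy, hy'⟩ := ihu
      rcases hp.eq_two_or_odd' with h2 | hodd
      · -- p = 2 : (p ^ k) even, (-u)^(p ^ k) = u^(p ^ k)
        have hceven : Even (p ^ k) := by
          rw [h2]
          exact Nat.even_pow.mpr ⟨even_two, by omega⟩
        refine ⟨y + u, Subring.add_mem _ hy hu, ?_⟩
        rw [hceven.neg_pow, mul_add, ← hy', h2]
        push_cast
        rw [two_mul]
        abel
      · have hcodd : Odd (p ^ k) := hodd.pow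
        refine ⟨-y, Subring.neg_mem _ hy, ?_⟩
        rw [hcodd.neg_pow, mul_neg, ← hy']
        abel
    | mul u v hu hv ihu ihv =>
      obtain ⟨yu, hyu, hyu'⟩ := ihu
      obtain ⟨yv, hyv, hyv'⟩ := ihv
      have hcomm : Commute u v := AH_comm hab u hu v hv
      refine ⟨yu * v ^ (p ^ k) + u * yv, Subring.add_mem _
        (Subring.mul_mem _ hyu (Subring.pow_mem _ hv (p ^ k)))
        (Subring.mul_mem _ hu hyv), ?_⟩
      have hmulpow : (u * v) ^ (p ^ k) = u ^ (p ^ k) * v ^ (p ^ k) := hcomm.mul_pow (p ^ k)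
      calc (u * v) ^ (p ^ k) - u * v = (u ^ (p ^ k) - u) * v ^ (p ^ k) + u * (v ^ (p ^ k) - v) := by
            rw [hmulpow, sub_mul, mul_sub]
            abel
        _ = (p : Rng P) * (yu * v ^ (p ^ k) + u * yv) := by
            rw [hyu', hyv', mul_add, mul_assoc]
            congr 1
            rw [← mul_assoc, ← (Nat.cast_commute p u).eq, mul_assoc]
  -- iterate: a ≡ a^((p ^ k)^j) mod p·(AH H)
  have hiter : ∀ j : ℕ, ∃ y ∈ AH H, a ^ ((p ^ k) ^ j) - a = (p : Rng P) * y := by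
    intro j
    induction j with
    | zero =>
      refine ⟨0, Subring.zero_mem _, ?_⟩
      rw [pow_zero, pow_one, sub_self, mul_zero]
    | succ j ih =>
      obtain ⟨y, hy, hy'⟩ := ih
      obtain ⟨z, hz, hz'⟩ := hfrob (a ^ ((p ^ k) ^ j)) (Subring.pow_mem _ ha _)
      refine ⟨z + y, Subring.add_mem _ hz hy, ?_⟩
      have : a ^ (p ^ k) ^ (j + 1) = (a ^ (p ^ k) ^ j) ^ (p ^ k) := by
        conv_rhs => rw [← pow_mul, ← pow_succ]
      rw [this, mul_add, ← hz', ← hy']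
      abel
  obtain ⟨n, hn⟩ := hnil
  obtain ⟨y, hy, hy'⟩ := hiter n
  have hcn : n ≤ (p ^ k) ^ n := le_of_lt (Nat.lt_pow_self (by
    have := hp.two_le
    have : 2 ≤ (p ^ k) := by
      calc 2 ≤ p := hp.two_le
        _ = p ^ 1 := (pow_one p).symm
        _ ≤ p ^ k := Nat.pow_le_pow_right (by omega) (by omega)
    omega))
  have hacn : a ^ ((p ^ k) ^ n) = 0 := by
    calc a ^ ((p ^ k) ^ n) = a ^ n * a ^ ((p ^ k) ^ n - n) := by rw [← pow_add]; congr 1; omega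
      _ = 0 := by rw [hn, zero_mul]
  rw [hacn, zero_sub] at hy'
  refine ⟨-y, Subring.neg_mem _ hy, ?_⟩
  rw [mul_neg, ← hy', neg_neg]
end nil

section cyclic
variable [Finite P] {p : ℕ} {H : Subgroup (MulAut P)}

lemma exists_exp (hp : p.Prime) (hP : IsPGroup p P) : ∃ n : ℕ, ∀ x : P, x ^ p ^ n = 1 := by
  haveI : Fact p.Prime := ⟨hp⟩
  obtain ⟨n, hn⟩ := IsPGroup.exists_card_eq hP
  exact ⟨n, fun x => by rw [← hn]; exact pow_card_eq_one'⟩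

/-- Under an indecomposable coprime abelian action, a nontrivial `P` is a cyclic
module over the subring generated by `H`. -/
lemma orb_eq_top (hp : p.Prime) (hP : IsPGroup p P)
    (hab : ∀ a ∈ H, ∀ b ∈ H, a * b = b * a)
    (hcop : (Nat.card H).Coprime p)
    (hind : ActsIndecomposably (H : Set (MulAut P)))
    (hnt : Nontrivial P) :
    ∃ x : P, orb H x = ⊤ := by
  classical
  -- minimal exponent
  have hex := exists_exp hp hP
  set e := Nat.find hex with he
  have hD : ∀ x : P, x ^ p ^ e = 1 := Nat.find_spec hex
  have he0 : e ≠ 0 := by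
    intro h0
    obtain ⟨u, v, huv⟩ := hnt
    apply huv
    have hu := hD u
    have hv := hD v
    rw [h0, pow_zero, pow_one] at hu hv
    rw [hu, hv]
  obtain ⟨x, hxmax⟩ : ∃ x : P, x ^ p ^ (e - 1) ≠ 1 := by
    have := Nat.find_min hex (m := e - 1) (by omega)
    push_neg at this
    exact this
  have hx1 : x ≠ 1 := by
    intro h
    exact hxmax (by rw [h, one_pow])
  set M := orb H x with hM
  have hxM : x ∈ M := self_mem_orb H x
  have hMbot : M ≠ ⊥ := by
    intro h
    rw [h, Subgroup.mem_bot] at hxM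
    exact hx1 hxM
  have hMinv : ∀ h ∈ H, ∀ y ∈ M, h y ∈ M := orb_inv H x
  -- maximal invariant complement C
  obtain ⟨C, ⟨hCinv, hCM⟩, hCmax⟩ := Set.Finite.exists_maximalFor id
    {C : Subgroup P | (∀ h ∈ H, ∀ y ∈ C, h y ∈ C) ∧ C ⊓ M = ⊥} (Set.toFinite _)
    ⟨⊥, fun h _ y hy => by
        rw [Subgroup.mem_bot] at hy
        rw [hy]; simp, bot_inf_eq M⟩
  simp only [id] at hCmax
  -- invariance of M and C under the whole subring
  have hMA : ∀ a ∈ AH H, ∀ y ∈ M, ap a y ∈ M := AH_inv hMinv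
  have hCA : ∀ a ∈ AH H, ∀ y ∈ C, ap a y ∈ C := AH_inv hCinv
  have hsupA : ∀ a ∈ AH H, ∀ y ∈ M ⊔ C, ap a y ∈ M ⊔ C := by
    intro a ha y hy
    obtain ⟨m1, hm1, c1, hc1, rfl⟩ := Subgroup.mem_sup.mp hy
    rw [ap_mul]
    exact Subgroup.mul_mem _
      ((le_sup_left : M ≤ M ⊔ C) (hMA a ha m1 hm1))
      ((le_sup_right : C ≤ M ⊔ C) (hCA a ha c1 hc1))
  -- key claim: M ⊔ C = ⊤
  have hsup : M ⊔ C = ⊤ := by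
    by_contra hne
    obtain ⟨z, hz⟩ : ∃ z : P, z ∉ M ⊔ C := by
      by_contra hzz
      push_neg at hzz
      exact hne (by rwa [eq_top_iff'])
    -- least j with z^(p^j) ∈ M ⊔ C
    have hexj : ∃ j, z ^ p ^ j ∈ M ⊔ C := ⟨e, by rw [hD z]; exact Subgroup.one_mem _⟩
    set j := Nat.find hexj with hj
    have hjmem : z ^ p ^ j ∈ M ⊔ C := Nat.find_spec hexj
    have hj0 : j ≠ 0 := by
      intro h0
      rw [h0, pow_zero, pow_one] at hjmem
      exact hz hjmem
    set y := z ^ p ^ (j - 1) with hy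
    have hynot : y ∉ M ⊔ C := Nat.find_min hexj (m := j - 1) (by omega)
    have hyp : y ^ p ∈ M ⊔ C := by
      have : y ^ p = z ^ p ^ j := by
        rw [hy, ← pow_mul, ← pow_succ]
        congr 2
        omega
      rwa [this]
    obtain ⟨mm, hmm, cc, hcc, hmc⟩ := Subgroup.mem_sup.mp hyp
    obtain ⟨a, haA, hax⟩ := mem_orb.mp hmm
    -- mm ^ (p^(e-1)) = 1
    have hkill : mm ^ p ^ (e - 1) = 1 := by
      have h1 : mm ^ p ^ (e - 1) * cc ^ p ^ (e - 1) = 1 := by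
        have : (mm * cc) ^ p ^ (e - 1) = 1 := by
          rw [hmc, ← pow_mul, show p * p ^ (e-1) = p ^ e by
            rw [← pow_succ']
            congr 1
            omega]
          exact hD y
        rwa [mul_pow] at this
      have h2 : mm ^ p ^ (e - 1) ∈ M ⊓ C := by
        constructor
        · exact Subgroup.pow_mem M hmm _
        · have : mm ^ p ^ (e-1) = (cc ^ p ^ (e-1))⁻¹ := by
            rw [eq_inv_iff_mul_eq_one]
            exact h1
          rw [this]
          exact Subgroup.inv_mem C (Subgroup.pow_mem C hcc _)
      rw [inf_comm, hCM, Subgroup.mem_bot] at h2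
      exact h2
    -- a is nilpotent, hence mm = m'^p with m' ∈ M
    have hanil : ∃ n, a ^ n = 0 := by
      rcases fitting hab hind haA with ⟨n, _, hn⟩ | hbij
      · exact ⟨n, hn⟩
      · exfalso
        apply hxmax
        apply hbij.injective
        rw [ap_one]
        rw [← hax] at hkill
        rw [← ap_pow] at hkill
        exact hkill
    obtain ⟨b, hbA, hba⟩ := nil_mem_p hp hab hcop haA hanil
    set m' := ap b x with hm'
    have hm'M : m' ∈ M := ⟨b, hbA, rfl⟩
    have hm'p : m' ^ p = mm := by
      rw [hm', ← hax, hba, ap_ringMul, ap_natCast]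
    set w := y * m'⁻¹ with hw
    have hwp : w ^ p = cc := by
      rw [hw, mul_pow, inv_pow, hm'p, ← hmc, mul_comm mm cc, mul_assoc, mul_inv_cancel,
        mul_one]
    have hwnot : w ∉ C := by
      intro hwC
      apply hynot
      have : y = w * m' := by rw [hw]; group
      rw [this]
      exact Subgroup.mul_mem _ ((le_sup_right : C ≤ M ⊔ C) hwC)
        ((le_sup_left : M ≤ M ⊔ C) hm'M)
    -- the bigger invariant complement C ⊔ orb H w
    set C' := C ⊔ orb H w with hC'
    have hC'inv : ∀ h ∈ H, ∀ v ∈ C', h v ∈ C' := by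
      intro h hh v hv
      obtain ⟨c1, hc1, o1, ho1, rfl⟩ := Subgroup.mem_sup.mp hv
      rw [map_mul]
      exact Subgroup.mul_mem _
        ((le_sup_left : C ≤ C') (hCinv h hh c1 hc1))
        ((le_sup_right : orb H w ≤ C') (orb_inv H w h hh o1 ho1))
    have hC'M : C' ⊓ M = ⊥ := by
      rw [eq_bot_iff]
      intro v hv
      rw [Subgroup.mem_inf] at hv
      obtain ⟨hvC', hvM⟩ := hv
      obtain ⟨c1, hc1, o1, ho1, rfl⟩ := Subgroup.mem_sup.mp hvC'
      obtain ⟨a1, ha1A, rfl⟩ := mem_orb.mp ho1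
      rw [Subgroup.mem_bot]
      rcases fitting hab hind ha1A with ⟨n1, _, hn1⟩ | hbij
      · -- nilpotent: ap a1 w ∈ C, so v ∈ C ⊓ M = ⊥
        obtain ⟨b1, hb1A, hb1⟩ := nil_mem_p hp hab hcop ha1A ⟨n1, hn1⟩
        have : ap a1 w ∈ C := by
          have h3 : ap a1 w = ap b1 (w ^ p) := by
            rw [ap_pow, hb1, ap_ringMul, ap_natCast]
          rw [h3, hwp]
          exact hCA b1 hb1A cc hcc
        have hvmem : c1 * ap a1 w ∈ C ⊓ M :=
          ⟨Subgroup.mul_mem _ hc1 this, hvM⟩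
        rw [hCM, Subgroup.mem_bot] at hvmem
        exact hvmem
      · -- bijective: w ∈ M ⊔ C, contradiction
        exfalso
        obtain ⟨a1', ha1'A, hinv1, hinv2⟩ := AH_inverse ha1A hbij.injective
        have how : ap a1 w ∈ M ⊔ C := by
          have : ap a1 w = c1⁻¹ * (c1 * ap a1 w) := by group
          rw [this]
          exact Subgroup.mul_mem _
            ((le_sup_right : C ≤ M ⊔ C) (Subgroup.inv_mem C hc1))
            ((le_sup_left : M ≤ M ⊔ C) hvM)
        have hwmem : w ∈ M ⊔ C := by
          have : w = ap a1' (ap a1 w) := by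
            rw [← ap_ringMul, hinv2, ap_ringOne]
          rw [this]
          exact hsupA a1' ha1'A _ how
        apply hynot
        have : y = w * m' := by rw [hw]; group
        rw [this]
        exact Subgroup.mul_mem _ hwmem ((le_sup_left : M ≤ M ⊔ C) hm'M)
    have hCC' : C ≤ C' := le_sup_left
    have hne' : C ≠ C' := by
      intro h
      apply hwnot
      rw [h]
      exact (le_sup_right : orb H w ≤ C') (self_mem_orb H w)
    exact hne' (le_antisymm hCC' (hCmax ⟨hC'inv, hC'M⟩ hCC'))
  -- indecomposability forces C = ⊥
  by_cases hCbot : C = ⊥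
  · refine ⟨x, ?_⟩
    rw [← hsup, hM, hCbot, sup_bot_eq]
  · exfalso
    apply hind
    exact ⟨M, C, hMbot, hCbot, by rw [inf_comm]; exact hCM, hsup, hMinv, hCinv⟩

end cyclic

section quot
variable [Finite P] {p : ℕ} {H : Subgroup (MulAut P)}

lemma ap_sum {ι : Type*} (s : Finset ι) (f : ι → Rng P) (z : P) :
    ap (∑ i ∈ s, f i) z = ∏ i ∈ s, ap (f i) z := by
  classical
  induction s using Finset.induction_on with
  | empty => simp
  | insert _ _ h ih => rw [Finset.sum_insert h, Finset.prod_insert h, ap_ringAdd, ih]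

lemma pw_le {r s : ℕ} (h : r ∣ s) : pw P s ≤ pw P r := by
  rintro _ ⟨t, rfl⟩
  obtain ⟨c, rfl⟩ := h
  exact ⟨t ^ c, by simp only [powMonoidHom_apply]; rw [← pow_mul, mul_comm r c, pow_mul]⟩

lemma pw_mul {a b : ℕ} {x : P} (hx : x ∈ pw P a) : x ^ b ∈ pw P (a * b) := by
  obtain ⟨t, rfl⟩ := hx
  exact ⟨t, by simp only [powMonoidHom_apply]; rw [← pow_mul]⟩

lemma pw_mul_p {s c : ℕ} {x : P} (hx : x ∈ pw P (p ^ s)) : x ^ (p * c) ∈ pw P (p ^ (s + 1)) := by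
  obtain ⟨t, rfl⟩ := hx
  refine ⟨t ^ c, ?_⟩
  simp only [powMonoidHom_apply]
  rw [← pow_mul, ← pow_mul]
  congr 1
  rw [pow_succ]
  ring

/-- one `p`-th power step for the reduction mod Frattini argument -/
lemma quot_step (hp : p.Prime) (g' : MulAut P) (j : ℕ)
    (hδ : ∀ z : P, g' z * z⁻¹ ∈ pw P (p ^ (j + 1))) :
    ∀ z : P, (g' ^ p) z * z⁻¹ ∈ pw P (p ^ (j + 2)) := by
  intro z
  set δ : Rng P := autEnd g' - 1 with hδdef
  have hδap : ∀ w : P, ap δ w = g' w * w⁻¹ := by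
    intro w
    rw [hδdef, ap_ringSub, ap_autEnd, ap_ringOne]
  have hδmem : ∀ w : P, ap δ w ∈ pw P (p ^ (j + 1)) := fun w => (hδap w) ▸ hδ w
  -- iterated powers of δ
  have hδpow : ∀ i : ℕ, 1 ≤ i → ∀ w : P, ap (δ ^ i) w ∈ pw P (p ^ (i * (j + 1))) := by
    intro i hi
    induction i with
    | zero => omega
    | succ i ih =>
      intro w
      by_cases hi0 : i = 0
      · subst hi0
        simpa [pow_one, one_mul] using hδmem w
      · have hih := ih (by omega)
        obtain ⟨u, hu⟩ := hδmem w
        simp only [powMonoidHom_apply] at hu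
        have h1 : ap (δ ^ (i + 1)) w = ap (δ ^ i) (ap δ w) := by
          rw [pow_succ, ap_ringMul]
        rw [h1, ← hu, ap_pow]
        have h2 := pw_mul (b := p ^ (j + 1)) (hih u)
        refine pw_le ?_ h2
        rw [← pow_add]
        exact pow_dvd_pow p (by nlinarith)
  -- binomial expansion
  have hcomm : Commute δ (1 : Rng P) := Commute.one_right δ
  have hbin : autEnd (g' ^ p) = ∑ i ∈ Finset.range (p + 1),
      δ ^ i * 1 ^ (p - i) * ((p.choose i : ℕ) : Rng P) := by
    rw [autEnd_pow, show autEnd g' = δ + 1 by rw [hδdef, sub_add_cancel], hcomm.add_pow]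
  have happ : (g' ^ p) z = ∏ i ∈ Finset.range (p + 1),
      (ap (δ ^ i) z) ^ (p.choose i) := by
    have h3 : ap (autEnd (g' ^ p)) z = (g' ^ p) z := ap_autEnd _ z
    rw [← h3, hbin, ap_sum]
    refine Finset.prod_congr rfl ?_
    intro i _
    rw [one_pow, mul_one, ap_ringMul, ap_natCast, ap_pow]
  have hsplit : (g' ^ p) z = (∏ i ∈ Finset.range p, (ap (δ ^ (i + 1)) z) ^ (p.choose (i + 1)))
      * z := by
    rw [happ, Finset.prod_range_succ']
    congr 1
    simp
  have hprodmem : (∏ i ∈ Finset.range p, (ap (δ ^ (i + 1)) z) ^ (p.choose (i + 1)))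
      ∈ pw P (p ^ (j + 2)) := by
    apply Subgroup.prod_mem
    intro i hi
    rw [Finset.mem_range] at hi
    have hmem := hδpow (i + 1) (by omega) z
    by_cases hip : i + 1 = p
    · -- top term, choose = 1
      rw [hip, Nat.choose_self, pow_one]
      rw [hip] at hmem
      refine pw_le ?_ hmem
      refine pow_dvd_pow p ?_
      have h2p := hp.two_le
      have := Nat.mul_le_mul_right (j + 1) h2p
      omega
    · -- middle terms: p ∣ choose
      have hlt : i + 1 < p := by omega
      obtain ⟨c, hc⟩ := hp.dvd_choose_self (by omega) hlt
      rw [hc]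
      have hmm := pw_mul_p (c := c) hmem
      refine pw_le ?_ hmm
      refine pow_dvd_pow p ?_
      have := Nat.mul_le_mul_right (j + 1) (show 1 ≤ i + 1 by omega)
      omega
  rw [hsplit, mul_assoc, mul_inv_cancel, mul_one]
  exact hprodmem

/-- Injectivity of the reduction-mod-Frattini map. -/
lemma quot_inj (hp : p.Prime) (hP : IsPGroup p P)
    (hcop : (Nat.card H).Coprime p) :
    Function.Injective (fun h : H => inducedQuotAut (frattini P) (h : MulAut P)) := by
  have hfr : frattini P = pw P p := frattini_eq hp hP
  intro h₁ h₂ heq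
  simp only at heq
  set g : MulAut P := (h₁ : MulAut P) * (h₂ : MulAut P)⁻¹ with hg
  -- g reduces to the identity
  have hgz : ∀ z : P, g z * z⁻¹ ∈ pw P (p ^ (0 + 1)) := by
    intro z
    have h5 : (h₂ : MulAut P) ((h₂ : MulAut P)⁻¹ z) = z := by
      rw [← MulAut.mul_apply, mul_inv_cancel, MulAut.one_apply]
    have h4 : ((h₁ : MulAut P) ((h₂ : MulAut P)⁻¹ z) : P ⧸ frattini P)
        = (((h₂ : MulAut P) ((h₂ : MulAut P)⁻¹ z) : P) : P ⧸ frattini P) := by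
      have := congrArg (fun e : MulAut (P ⧸ frattini P) =>
        e ((((h₂ : MulAut P)⁻¹ z : P)) : P ⧸ frattini P)) heq
      exact this
    rw [h5] at h4
    have h6 : g z * z⁻¹ ∈ frattini P := by
      rw [← QuotientGroup.eq_one_iff]
      have h10 : ((g z : P) : P ⧸ frattini P) = ((z : P) : P ⧸ frattini P) := by
        rw [hg]
        rw [MulAut.mul_apply]
        exact h4
      rw [QuotientGroup.mk_mul, QuotientGroup.mk_inv, h10, mul_inv_cancel]
    rw [hfr] at h6
    simpa [pow_one] using h6
  -- iterate the step
  have hiter : ∀ j : ℕ, ∀ z : P, (g ^ p ^ j) z * z⁻¹ ∈ pw P (p ^ (j + 1)) := by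
    intro j
    induction j with
    | zero => simpa using hgz
    | succ j ih =>
      have : g ^ p ^ (j + 1) = (g ^ p ^ j) ^ p := by
        rw [← pow_mul, pow_succ]
      rw [this]
      exact quot_step hp _ j ih
  -- with e the exponent, g ^ (p ^ e) = 1
  obtain ⟨e, hD⟩ := exists_exp hp hP
  have hge : g ^ p ^ e = 1 := by
    ext z
    have h7 := hiter e z
    obtain ⟨t, ht⟩ := h7
    simp only [powMonoidHom_apply] at ht
    have h8 : t ^ p ^ (e + 1) = 1 := by
      have h13 : t ^ p ^ (e + 1) = (t ^ p ^ e) ^ p := by rw [← pow_mul, ← pow_succ]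
      rw [h13, hD t, one_pow]
    have h9 : (g ^ p ^ e) z * z⁻¹ = 1 := by rw [← ht]; exact h8
    have := mul_inv_eq_one.mp h9
    simpa using this
  -- coprimality gives g = 1
  have hgH : g ∈ H := by
    rw [hg]
    exact H.mul_mem h₁.2 (H.inv_mem h₂.2)
  have hdvd1 : orderOf g ∣ Nat.card H := by
    have h11 := orderOf_dvd_natCard (⟨g, hgH⟩ : H)
    have h12 : orderOf ((⟨g, hgH⟩ : H) : MulAut P) = orderOf (⟨g, hgH⟩ : H) :=
      Subgroup.orderOf_coe _
    rw [← h12] at h11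
    exact h11
  have hdvd2 : orderOf g ∣ p ^ e := orderOf_dvd_of_pow_eq_one hge
  have hcop' : (Nat.card H).Coprime (p ^ e) := hcop.pow_right e
  have : orderOf g ∣ 1 := hcop' ▸ Nat.dvd_gcd hdvd1 hdvd2
  have hg1 : g = 1 := orderOf_eq_one_iff.mp (Nat.dvd_one.mp this)
  apply Subtype.ext
  have := mul_inv_eq_one.mp (hg ▸ hg1)
  exact this
end quot

section directions
variable [Finite P] {p : ℕ} {H : Subgroup (MulAut P)}

/-- Indecomposability descends to the Frattini quotient. -/
lemma indec_to_quot (hp : p.Prime) (hP : IsPGroup p P)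
    (hab : ∀ a ∈ H, ∀ b ∈ H, a * b = b * a) (hcop : (Nat.card H).Coprime p)
    (hind : ActsIndecomposably (H : Set (MulAut P))) :
    ActsIndecomposably ((fun h => inducedQuotAut (frattini P) h) '' (H : Set (MulAut P))) := by
  have hfr : frattini P = pw P p := frattini_eq hp hP
  rintro ⟨V₁, V₂, hV1, hV2, hinf, hsup, hi1, hi2⟩
  obtain ⟨v, hvV, hv1⟩ := V₁.bot_or_exists_ne_one.resolve_left hV1
  obtain ⟨y, rfl⟩ := QuotientGroup.mk'_surjective (frattini P) v
  have hnt : Nontrivial P := by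
    refine ⟨⟨y, 1, ?_⟩⟩
    intro h
    apply hv1
    rw [QuotientGroup.mk'_apply, h]
    rfl
  obtain ⟨x, horb⟩ := orb_eq_top hp hP hab hcop hind hnt
  -- ring invariance of V₁
  have hQ : ∀ a ∈ AH H, ∀ z : P, ((z : P ⧸ frattini P) ∈ V₁) →
      ((ap a z : P) : P ⧸ frattini P) ∈ V₁ := by
    intro a ha
    induction ha using Subring.closure_induction with
    | mem u hu =>
      obtain ⟨f, hf, rfl⟩ := hu
      intro z hz
      exact hi1 (inducedQuotAut (frattini P) f) ⟨f, hf, rfl⟩ _ hz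
    | zero =>
      intro z _
      have : ((ap (0 : Rng P) z : P) : P ⧸ frattini P) = 1 := by
        rw [ap_ringZero]; rfl
      rw [this]
      exact V₁.one_mem
    | one => intro z hz; rwa [ap_ringOne]
    | add u w hu hw ihu ihw =>
      intro z hz
      rw [ap_ringAdd, QuotientGroup.mk_mul]
      exact V₁.mul_mem (ihu z hz) (ihw z hz)
    | neg u hu ihu =>
      intro z hz
      rw [ap_ringNeg, QuotientGroup.mk_inv]
      exact V₁.inv_mem (ihu z hz)
    | mul u w hu hw ihu ihw =>
      intro z hz
      rw [ap_ringMul]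
      exact ihu _ (ihw z hz)
  have hyx : y ∈ orb H x := by rw [horb]; exact Subgroup.mem_top y
  obtain ⟨a, haA, hax⟩ := mem_orb.mp hyx
  have hbij : Function.Bijective (ap a) := by
    rcases fitting hab hind haA with ⟨n, _, hn⟩ | hbij
    · exfalso
      obtain ⟨b, hbA, hba⟩ := nil_mem_p hp hab hcop haA ⟨n, hn⟩
      apply hv1
      rw [QuotientGroup.mk'_apply, ← hax, QuotientGroup.eq_one_iff, hfr, hba, ap_ringMul,
        ap_natCast]
      exact pow_mem_pw _ p
    · exact hbij
  obtain ⟨a', ha'A, hinv1, hinv2⟩ := AH_inverse haA hbij.injective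
  have hxV : ((x : P) : P ⧸ frattini P) ∈ V₁ := by
    have h1 := hQ a' ha'A y hvV
    have hxy : ap a' y = x := by rw [← hax, ← ap_ringMul, hinv2, ap_ringOne]
    rwa [hxy] at h1
  have hV1top : V₁ = ⊤ := by
    rw [eq_top_iff]
    rintro v' -
    obtain ⟨z, rfl⟩ := QuotientGroup.mk'_surjective (frattini P) v'
    have hz : z ∈ orb H x := by rw [horb]; exact Subgroup.mem_top z
    obtain ⟨c, hcA, hcx⟩ := mem_orb.mp hz
    rw [QuotientGroup.mk'_apply, ← hcx]
    exact hQ c hcA x hxV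
  rw [hV1top, top_inf_eq] at hinf
  exact hV2 hinf

/-- Indecomposability lifts from the Frattini quotient. -/
lemma quot_to_indec (hp : p.Prime) (hP : IsPGroup p P)
    (hindQ : ActsIndecomposably ((fun h => inducedQuotAut (frattini P) h) '' (H : Set (MulAut P)))) :
    ActsIndecomposably (H : Set (MulAut P)) := by
  have hfr : frattini P = pw P p := frattini_eq hp hP
  rintro ⟨P₁, P₂, h1, h2, hinf, hsup, hi1, hi2⟩
  apply hindQ
  set mk : P →* P ⧸ frattini P := QuotientGroup.mk' (frattini P) with hmk
  -- images of nontrivial factors are nontrivial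
  have key : ∀ A B : Subgroup P, A ≠ ⊥ → A ⊓ B = ⊥ → A ⊔ B = ⊤ → A.map mk ≠ ⊥ := by
    intro A B hA hAB hABtop hmap
    obtain ⟨y0, hy0A, hy01⟩ := A.bot_or_exists_ne_one.resolve_left hA
    obtain ⟨y, hyA, hymax⟩ := Set.Finite.exists_maximalFor orderOf {a : P | a ∈ A}
      (Set.toFinite _) ⟨y0, hy0A⟩
    have hyle : ∀ a' ∈ A, orderOf a' ≤ orderOf y := by
      intro a' ha'
      by_contra hgt
      push_neg at hgt
      have := hymax ha' hgt.le
      omega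
    have hy1 : y ≠ 1 := by
      intro h
      have h0 : 1 < orderOf y0 := by
        have := orderOf_pos y0
        have h01 : orderOf y0 ≠ 1 := fun hh => hy01 (orderOf_eq_one_iff.mp hh)
        omega
      have := hyle y0 hy0A
      rw [h, orderOf_one] at this
      omega
    -- y is a p-th power of an element of A
    have hyQ : y ∈ pw P p := by
      rw [← hfr, ← QuotientGroup.eq_one_iff]
      have : mk y ∈ A.map mk := ⟨y, hyA, rfl⟩
      rw [hmap, Subgroup.mem_bot] at this
      exact this
    obtain ⟨z, hz⟩ := mem_pw.mp hyQ
    have hztop : z ∈ A ⊔ B := hABtop ▸ Subgroup.mem_top z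
    obtain ⟨z₁, hz₁, z₂, hz₂, hz12⟩ := Subgroup.mem_sup.mp hztop
    have hy2 : y = z₁ ^ p * z₂ ^ p := by rw [← hz, ← hz12, mul_pow]
    have hz2p : (z₁ ^ p)⁻¹ * y = z₂ ^ p := by rw [hy2]; group
    have hmem : (z₁ ^ p)⁻¹ * y ∈ A ⊓ B := by
      constructor
      · exact A.mul_mem (A.inv_mem (A.pow_mem hz₁ p)) hyA
      · rw [hz2p]
        exact B.pow_mem hz₂ p
    rw [hAB, Subgroup.mem_bot] at hmem
    have hy3 : y = z₁ ^ p := by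
      have := congrArg (fun t => z₁ ^ p * t) hmem
      simpa [mul_inv_cancel_left] using this
    -- order contradiction
    obtain ⟨k, hk⟩ := hP z₁
    obtain ⟨s, _, hs⟩ := (Nat.dvd_prime_pow hp).mp (orderOf_dvd_of_pow_eq_one hk)
    have hs0 : s ≠ 0 := by
      intro h0
      rw [h0, pow_zero] at hs
      exact hy1 (by rw [hy3, orderOf_eq_one_iff.mp hs, one_pow])
    have hdvd : orderOf y ∣ p ^ (s - 1) := by
      apply orderOf_dvd_of_pow_eq_one
      rw [hy3, ← pow_mul, ← pow_succ', show s - 1 + 1 = s by omega, ← hs]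
      exact pow_orderOf_eq_one z₁
    have hlt : p ^ (s - 1) < p ^ s := Nat.pow_lt_pow_right hp.one_lt (by omega)
    have hle1 := Nat.le_of_dvd (pow_pos hp.pos _) hdvd
    have hle2 := hyle z₁ hz₁
    rw [hs] at hle2
    omega
  refine ⟨P₁.map mk, P₂.map mk, key P₁ P₂ h1 hinf hsup,
    key P₂ P₁ h2 (by rw [inf_comm]; exact hinf) (by rw [sup_comm]; exact hsup), ?_, ?_, ?_, ?_⟩
  · -- trivial intersection
    rw [eq_bot_iff]
    intro v hv
    rw [Subgroup.mem_inf] at hv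
    obtain ⟨hv1, hv2⟩ := hv
    obtain ⟨y₁, hy₁, rfl⟩ := hv1
    obtain ⟨y₂, hy₂, hy₂'⟩ := hv2
    have hQ12 : y₂ * y₁⁻¹ ∈ pw P p := by
      rw [← hfr, ← QuotientGroup.eq_one_iff, QuotientGroup.mk_mul, QuotientGroup.mk_inv]
      have hy₂'' : ((y₂ : P) : P ⧸ frattini P) = ((y₁ : P) : P ⧸ frattini P) := hy₂'
      rw [hy₂'', mul_inv_cancel]
    obtain ⟨z, hz⟩ := mem_pw.mp hQ12
    have hztop : z ∈ P₁ ⊔ P₂ := hsup ▸ Subgroup.mem_top z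
    obtain ⟨z₁, hz₁, z₂, hz₂, hz12⟩ := Subgroup.mem_sup.mp hztop
    have hyz : y₂ * y₁⁻¹ = z₁ ^ p * z₂ ^ p := by rw [← hz, ← hz12, mul_pow]
    have hy₂eq : y₂ = z₁ ^ p * z₂ ^ p * y₁ := by rw [← hyz]; group
    have heq2 : (z₂ ^ p)⁻¹ * y₂ = z₁ ^ p * y₁ := by
      rw [hy₂eq]
      calc (z₂ ^ p)⁻¹ * (z₁ ^ p * z₂ ^ p * y₁)
          = (z₂ ^ p)⁻¹ * (z₂ ^ p * (z₁ ^ p * y₁)) := by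
            rw [mul_comm (z₁ ^ p) (z₂ ^ p), mul_assoc]
        _ = z₁ ^ p * y₁ := inv_mul_cancel_left _ _
    have hmem2 : (z₂ ^ p)⁻¹ * y₂ ∈ P₁ ⊓ P₂ := by
      constructor
      · rw [heq2]
        exact P₁.mul_mem (P₁.pow_mem hz₁ p) (by
          -- y₁ ∈ P₁
          exact hy₁)
      · exact P₂.mul_mem (P₂.inv_mem (P₂.pow_mem hz₂ p)) hy₂
    rw [hinf, Subgroup.mem_bot] at hmem2
    have hy₂Q : y₂ ∈ pw P p := by
      have : y₂ = z₂ ^ p := by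
        have := congrArg (fun t => z₂ ^ p * t) hmem2
        simpa [mul_inv_cancel_left] using this
      rw [this]
      exact pow_mem_pw z₂ p
    rw [Subgroup.mem_bot, ← hy₂', QuotientGroup.mk'_apply, QuotientGroup.eq_one_iff, hfr]
    exact hy₂Q
  · rw [← Subgroup.map_sup, hsup]
    exact Subgroup.map_top_of_surjective mk (QuotientGroup.mk'_surjective _)
  · rintro fbar ⟨f, hf, rfl⟩ v hv
    obtain ⟨y, hy, rfl⟩ := hv
    exact ⟨f y, hi1 f hf y hy, rfl⟩
  · rintro fbar ⟨f, hf, rfl⟩ v hv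
    obtain ⟨y, hy, rfl⟩ := hv
    exact ⟨f y, hi2 f hf y hy, rfl⟩
end directions

/-- Let `P` be a finite abelian `p`-group and `H` an abelian subgroup of `Aut(P)` whose
order is coprime to `p`.  Then the natural homomorphism `H → Aut(P/Φ(P))` induced by
reduction modulo the Frattini subgroup `Φ(P)` is injective.  Furthermore, `H` acts
indecomposably on `P` if and only if the induced action of `H` on `P/Φ(P)` is
indecomposable. -/
theorem stmt6 (p : ℕ) (hp : p.Prime) (P : Type) [CommGroup P] [Finite P]
    (hP : IsPGroup p P) (H : Subgroup (MulAut P))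
    (hab : ∀ a ∈ H, ∀ b ∈ H, a * b = b * a)
    (hcop : Nat.Coprime (Nat.card H) p) :
    Function.Injective (fun h : H => inducedQuotAut (frattini P) (h : MulAut P)) ∧
    (ActsIndecomposably (H : Set (MulAut P)) ↔
      ActsIndecomposably ((fun h => inducedQuotAut (frattini P) h) '' (H : Set (MulAut P)))) := by
  refine ⟨quot_inj hp hP hcop, ?_, ?_⟩
  · exact fun hind => indec_to_quot hp hP hab hcop hind
  · exact fun hindQ => quot_to_indec hp hP hindQ
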